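/- Second moment drift inequality: with W(ν) := ‖ν‖², the quantity L W(ν) := -2‖ν‖ ν[f] + [ν[f] + Λ(1-‖ν‖)]_+ (2‖ν‖ + 1/N) satisfies L W(ν) ≤ α - β W(ν) for suitable constants α, β > 0 depending only on f_min, ‖f‖_∞, Λ, N. -/

import Mathlib

open Real MeasureTheory Set

/-- Total mass of a measure on ℝ, as a real number. -/
noncomputable def mass (ν : Measure ℝ) : ℝ := (ν Set.univ).toReal

/-- The generator applied to W(ν) = ‖ν‖². -/
noncomputable def LW (f : ℝ → ℝ) (Λ N : ℝ) (ν : Measure ℝ) : ℝ :=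
  -(2 * mass ν * ∫ u, f u ∂ν) +
    max ((∫ u, f u ∂ν) + Λ * (1 - mass ν)) 0 * (2 * mass ν + 1 / N)

/-- Second moment drift inequality: L W(ν) ≤ α - β W(ν). -/
theorem second_moment_drift (f : ℝ → ℝ) (fmin B Λ N : ℝ)
    (hfmin : 0 < fmin) (hlow : ∀ u, fmin ≤ f u) (hup : ∀ u, f u ≤ B)
    (hmeas : Measurable f) (hΛ : 0 < Λ) (hN : 1 ≤ N) :
    ∃ α β : ℝ, 0 < α ∧ 0 < β ∧
      ∀ ν : Measure ℝ, IsFiniteMeasure ν →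
        LW f Λ N ν ≤ α - β * (mass ν) ^ 2 := by
  have hB : 0 < B := lt_of_lt_of_le hfmin ((hlow 0).trans (hup 0))
  refine ⟨(2 * Λ + B) ^ 2 / (4 * Λ) + Λ, min Λ (2 * fmin), ?_, ?_, ?_⟩
  · positivity
  · exact lt_min hΛ (by linarith)
  · intro ν hν
    set m : ℝ := mass ν with hm
    set I : ℝ := ∫ u, f u ∂ν with hI
    have hm0 : 0 ≤ m := ENNReal.toReal_nonneg
    have hint : Integrable f ν := by
      refine (integrable_const B).mono' hmeas.aestronglyMeasurable (ae_of_all _ fun u => ?_)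
      rw [Real.norm_eq_abs, abs_of_pos (lt_of_lt_of_le hfmin (hlow u))]
      exact hup u
    have hIlow : fmin * m ≤ I := by
      have := integral_mono (integrable_const fmin) hint (fun u => hlow u)
      simpa [integral_const, smul_eq_mul, mul_comm, hm, hI, mass, Measure.real] using this
    have hIup : I ≤ B * m := by
      have := integral_mono hint (integrable_const B) (fun u => hup u)
      simpa [integral_const, smul_eq_mul, mul_comm, hm, hI, mass, Measure.real] using this
    have hβΛ : min Λ (2 * fmin) ≤ Λ := min_le_left _ _
    have hβf : min Λ (2 * fmin) ≤ 2 * fmin := min_le_right _ _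
    have hNpos : (0:ℝ) < N := lt_of_lt_of_le one_pos hN
    have hNinv : 1 / N ≤ 1 := by
      rw [div_le_one hNpos]; exact hN
    have hNinv0 : 0 ≤ 1 / N := by positivity
    rw [LW, ← hm, ← hI]
    rcases le_or_gt (I + Λ * (1 - m)) 0 with h | h
    · rw [max_eq_right h]
      have hsq : 0 ≤ (2 * Λ + B - 2 * Λ * m) ^ 2 := sq_nonneg _
      have hα : 0 ≤ (2 * Λ + B) ^ 2 / (4 * Λ) := by positivity
      have hmono := mul_le_mul_of_nonneg_left hIlow hm0
      have hβm2 : min Λ (2 * fmin) * m ^ 2 ≤ 2 * fmin * m ^ 2 :=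
        mul_le_mul_of_nonneg_right hβf (sq_nonneg m)
      nlinarith
    · rw [max_eq_left h.le]
      have key : -(2 * m * I) + (I + Λ * (1 - m)) * (2 * m + 1 / N)
          ≤ 2 * Λ * m - 2 * Λ * m ^ 2 + (B * m + Λ) := by
        have h1 : (I + Λ * (1 - m)) * (1 / N) ≤ B * m + Λ := by
          have hpos : 0 ≤ I + Λ * (1 - m) := h.le
          have : (I + Λ * (1 - m)) * (1 / N) ≤ (I + Λ * (1 - m)) * 1 :=
            mul_le_mul_of_nonneg_left hNinv hpos
          nlinarith
        nlinarith
      have comp : 2 * Λ * m - 2 * Λ * m ^ 2 + (B * m + Λ)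
          ≤ (2 * Λ + B) ^ 2 / (4 * Λ) + Λ - min Λ (2 * fmin) * m ^ 2 := by
        have hsq : 0 ≤ (2 * Λ * m - (2 * Λ + B)) ^ 2 := sq_nonneg _
        have hcan : (2 * Λ + B) ^ 2 / (4 * Λ) * (4 * Λ) = (2 * Λ + B) ^ 2 :=
          div_mul_cancel₀ _ (by positivity)
        have hβm : min Λ (2 * fmin) * m ^ 2 ≤ Λ * m ^ 2 :=
          mul_le_mul_of_nonneg_right hβΛ (sq_nonneg m)
        nlinarith [sq_nonneg m]
      linarith
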